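/- Fix a real α with 1/2 < α < 1. For all sufficiently large integers w the following holds: for each integer k with 1 ≤ k ≤ w^α, any root z of z^w + z − 2 satisfying |z − exp(2πik/w)| ≤ C/w (for a suitable absolute constant C) has absolute value |z| = 1 + 4π²k²/w³ + O(k³/w⁴). In particular such roots satisfy |z| > 1. -/

import Mathlib

open Real Complex

set_option maxHeartbeats 1000000

private lemma log_sub_le_aux {a b m : ℝ} (hm : 0 < m) (ha : m ≤ a) (hb : m ≤ b) :
    |Real.log a - Real.log b| ≤ |a - b| / m := by
  have key : ∀ x y : ℝ, m ≤ x → m ≤ y → Real.log x - Real.log y ≤ |x - y| / m := by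
    intro x y hx hy
    have hx0 : 0 < x := lt_of_lt_of_le hm hx
    have hy0 : 0 < y := lt_of_lt_of_le hm hy
    have h1 : Real.log x - Real.log y = Real.log (x / y) := (Real.log_div hx0.ne' hy0.ne').symm
    rw [h1]
    have h2 : Real.log (x / y) ≤ x / y - 1 := Real.log_le_sub_one_of_pos (by positivity)
    have h3 : x / y - 1 = (x - y) / y := by field_simp
    have h4 : (x - y) / y ≤ |x - y| / m := div_le_div₀ (abs_nonneg _) (le_abs_self _) hm hy
    linarith
  rw [abs_sub_le_iff]
  refine ⟨key a b ha hb, ?_⟩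
  have := key b a hb ha
  rwa [abs_sub_comm] at this

private lemma abs_le_sin_bound {x : ℝ} (h : |x| ≤ π / 2) : |x| ≤ π / 2 * |Real.sin x| := by
  have hπ := Real.pi_pos
  rcases le_or_gt 0 x with hx | hx
  · have h1 : x ≤ π / 2 := by rwa [_root_.abs_of_nonneg hx] at h
    have h2 := Real.mul_le_sin hx h1
    have h3 : 0 ≤ Real.sin x := le_trans (by positivity) h2
    rw [_root_.abs_of_nonneg hx, _root_.abs_of_nonneg h3]
    rw [div_mul_eq_mul_div, div_le_iff₀ hπ] at h2
    nlinarith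
  · have hx' : 0 ≤ -x := by linarith
    have h1 : -x ≤ π / 2 := by rw [abs_of_neg hx] at h; linarith
    have h2 := Real.mul_le_sin hx' h1
    rw [Real.sin_neg, div_mul_eq_mul_div, div_le_iff₀ hπ] at h2
    have h3 : Real.sin x ≤ 0 := by nlinarith
    rw [abs_of_neg hx, abs_of_nonpos h3]
    nlinarith

private lemma one_sub_cos_le_sq (x : ℝ) : 1 - Real.cos x ≤ x ^ 2 / 2 := by
  nlinarith [Real.one_sub_sq_div_two_le_cos (x := x)]

private lemma one_sub_cos_ge_sq {x : ℝ} (h0 : 0 < x) (h1 : x ≤ 1) :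
    x ^ 2 / 2 - x ^ 4 / 8 ≤ 1 - Real.cos x := by
  have hc : Real.cos x = 1 - 2 * Real.sin (x / 2) ^ 2 := by
    have h := Real.cos_two_mul' (x / 2)
    have h2 := Real.sin_sq_add_cos_sq (x / 2)
    rw [show 2 * (x / 2) = x by ring] at h
    linarith
  have hs : x / 2 - (x / 2) ^ 3 / 4 < Real.sin (x / 2) :=
    lt_of_le_of_lt (by have := pow_pos (by linarith : (0:ℝ) < x / 2) 3; linarith)
      (Real.sin_gt_sub_cube (by linarith))
  have hx3 : x ^ 3 ≤ x := by
    nlinarith [mul_nonneg (mul_nonneg h0.le (by linarith : (0:ℝ) ≤ 1 - x))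
      (by linarith : (0:ℝ) ≤ 1 + x)]
  have hsnn : 0 ≤ x / 2 - (x / 2) ^ 3 / 4 := by nlinarith
  have hsq : (x / 2 - (x / 2) ^ 3 / 4) ^ 2 ≤ Real.sin (x / 2) ^ 2 := by nlinarith
  rw [hc]
  nlinarith [hsq, pow_nonneg h0.le 6]

/-- For large `w` and `1 ≤ k ≤ w^α` with `1/2 < α < 1`, any root of
`z^w + z - 2` close to the root of unity `exp(2πik/w)` satisfies
`|z| = 1 + 4π²k²/w³ + O(k³/w⁴)`; in particular `|z| > 1`. -/
theorem roots_near_unit_circle (α : ℝ) (hα₁ : 1 / 2 < α) (hα₂ : α < 1) :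
    ∃ C > (0 : ℝ), ∃ C' > (0 : ℝ), ∃ W : ℕ, ∀ w : ℕ, W ≤ w →
      ∀ k : ℕ, 1 ≤ k → (k : ℝ) ≤ (w : ℝ) ^ α →
        ∀ z : ℂ, z ^ w + z - 2 = 0 →
          ‖z - Complex.exp (2 * π * I * k / w)‖ ≤ C / w →
          (|‖z‖ - (1 + 4 * π ^ 2 * k ^ 2 / (w : ℝ) ^ 3)| ≤
              C' * k ^ 3 / (w : ℝ) ^ 4 ∧
            1 < ‖z‖) := by
  refine ⟨1/100, by norm_num, 50000, by norm_num,
    max 1000 ⌈(1000:ℝ) ^ ((1:ℝ)/(1-α))⌉₊, ?_⟩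
  intro w hw k hk1 hkα z hz hclose
  -- ## numeric setup
  have hw1000 : (1000:ℕ) ≤ w := le_trans (le_max_left _ _) hw
  have hwR : (1000:ℝ) ≤ (w:ℝ) := by exact_mod_cast hw1000
  have hwpos : (0:ℝ) < (w:ℝ) := by linarith
  have hwne : (w:ℝ) ≠ 0 := ne_of_gt hwpos
  have hπ3 := Real.pi_gt_three
  have hπ315 : π < 3.15 := Real.pi_lt_d2
  have hπpos := Real.pi_pos
  have hk1R : (1:ℝ) ≤ (k:ℝ) := by exact_mod_cast hk1
  obtain ⟨θ, hθdef⟩ : ∃ θ : ℝ, θ = 2*π*(k:ℝ)/(w:ℝ) := ⟨_, rfl⟩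
  obtain ⟨q, hqdef⟩ : ∃ q : ℝ, q = 1/(w:ℝ) := ⟨_, rfl⟩
  have hqpos : 0 < q := by rw [hqdef]; positivity
  have hqw : q * (w:ℝ) = 1 := by rw [hqdef]; field_simp
  have hq1000 : q ≤ 1/1000 := by
    rw [hqdef, div_le_div_iff₀ hwpos (by norm_num)]
    linarith
  have hθpos : 0 < θ := by
    rw [hθdef]
    apply div_pos (by clear * - hπ3 hk1R; nlinarith) hwpos
  have hθw : θ * w = 2*π*(k:ℝ) := by rw [hθdef]; field_simp
  have hθq : θ = 2*π*(k:ℝ)*q := by rw [hθdef, hqdef]; ring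
  have h1000 : (1000:ℝ) ≤ (w:ℝ)^(1-α) := by
    have hWceil : ((⌈(1000:ℝ) ^ ((1:ℝ)/(1-α))⌉₊ : ℕ) : ℝ) ≤ (w:ℝ) := by
      exact_mod_cast Nat.cast_le.mpr (le_trans (le_max_right _ _) hw)
    have h0 : (1000:ℝ)^((1:ℝ)/(1-α)) ≤ (w:ℝ) := le_trans (Nat.le_ceil _) hWceil
    have h2 : ((1000:ℝ)^((1:ℝ)/(1-α)))^(1-α) ≤ (w:ℝ)^(1-α) :=
      Real.rpow_le_rpow (by positivity) h0 (by linarith)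
    rwa [← Real.rpow_mul (by norm_num), one_div,
      inv_mul_cancel₀ (by linarith : (1:ℝ)-α ≠ 0), Real.rpow_one] at h2
  have hkw : (k:ℝ) ≤ (w:ℝ) := by
    have h1 : (w:ℝ)^α ≤ (w:ℝ)^(1:ℝ) :=
      Real.rpow_le_rpow_of_exponent_le (by linarith) (le_of_lt hα₂)
    rw [Real.rpow_one] at h1
    linarith [hkα]
  have hkq : (k:ℝ)*q ≤ 1 := by
    rw [hqdef, mul_one_div, div_le_one hwpos]
    exact hkw
  have hθ100 : θ ≤ 1/100 := by
    have hrnn : (0:ℝ) ≤ (w:ℝ)^α := Real.rpow_nonneg hwpos.le α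
    have hwα : (w:ℝ)^α * 1000 ≤ (w:ℝ) := by
      have h1 : (w:ℝ)^α * (w:ℝ)^(1-α) = (w:ℝ) := by
        rw [← Real.rpow_add hwpos]; norm_num
      nlinarith [mul_le_mul_of_nonneg_left h1000 hrnn]
    rw [hθdef, div_le_iff₀ hwpos]
    have h2 : 2*π*(k:ℝ) ≤ 2*π*(w:ℝ)^α :=
      mul_le_mul_of_nonneg_left hkα (by positivity)
    have h3 : 2*π*(w:ℝ)^α ≤ 6.3*(w:ℝ)^α :=
      mul_le_mul_of_nonneg_right (by nlinarith) hrnn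
    clear * - h2 h3 hwα hrnn
    nlinarith
  have hqθ : q ≤ θ/6 := by
    rw [hθq]
    have h1 : q*(3*(k:ℝ)) ≤ q*(π*(k:ℝ)) :=
      mul_le_mul_of_nonneg_left
        (mul_le_mul_of_nonneg_right hπ3.le (by positivity)) hqpos.le
    have h2 : q*1 ≤ q*(k:ℝ) := mul_le_mul_of_nonneg_left hk1R hqpos.le
    clear * - h1 h2
    nlinarith
  -- ## complex setup
  obtain ⟨ζ, hζdef⟩ : ∃ ζ : ℂ, ζ = Complex.exp (((θ:ℝ):ℂ) * I) := ⟨_, rfl⟩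
  have hζarg : (2 * (π:ℂ) * I * (k:ℂ) / (w:ℂ)) = ((θ:ℝ):ℂ) * I := by
    rw [hθdef]; push_cast; field_simp
  rw [hζarg, ← hζdef] at hclose
  have hζabs : ‖ζ‖ = 1 := by rw [hζdef]; exact Complex.norm_exp_ofReal_mul_I θ
  have hζre : ζ.re = Real.cos θ := by rw [hζdef]; exact Complex.exp_ofReal_mul_I_re θ
  have hζim : ζ.im = Real.sin θ := by rw [hζdef]; exact Complex.exp_ofReal_mul_I_im θ
  have hζne : ζ ≠ 0 := by rw [hζdef]; exact Complex.exp_ne_zero _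
  have hζw : ζ ^ w = 1 := by
    have hwCne : (w:ℂ) ≠ 0 := by
      simpa using (Nat.cast_ne_zero (R := ℂ)).mpr (by omega : w ≠ 0)
    rw [hζdef, ← Complex.exp_nat_mul]
    have h1 : ((w:ℂ) * (((θ:ℝ):ℂ) * I)) = ((k:ℤ):ℂ) * (2 * (π:ℂ) * I) := by
      have h2 : ((θ:ℝ):ℂ) = 2*(π:ℂ)*(k:ℂ)/(w:ℂ) := by rw [hθdef]; push_cast; ring
      rw [h2]; push_cast; field_simp
    rw [h1]
    exact Complex.exp_int_mul_two_pi_mul_I (k:ℤ)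
  clear hw hkα hα₁ hα₂ h1000 hζarg hζdef hθdef
  -- ## basic bounds
  have hεw : ‖z - ζ‖ ≤ (1/100)*q := by
    rw [hqdef]
    refine le_trans hclose (le_of_eq ?_)
    ring
  have hεθ : ‖z - ζ‖ ≤ θ/600 := by
    refine le_trans hεw ?_
    clear * - hqθ
    linarith
  have hεsmall : ‖z - ζ‖ ≤ 1/100000 := by
    refine le_trans hεw ?_
    clear * - hq1000
    linarith
  clear hclose
  have habssub : |‖z‖ - 1| ≤ ‖z - ζ‖ := by
    have h := abs_norm_sub_norm_le z ζ
    rwa [hζabs] at h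
  have hzup : ‖z‖ ≤ 101/100 := by
    have := abs_le.mp habssub
    clear * - this hεsmall
    linarith
  have hzlo : 99/100 ≤ ‖z‖ := by
    have := abs_le.mp habssub
    clear * - this hεsmall
    linarith
  have h2zlo : 99/100 ≤ ‖2 - z‖ := by
    have h := abs_norm_sub_norm_le 2 z
    rw [Complex.norm_two] at h
    have := abs_le.mp h
    clear * - this hzup
    linarith
  have h2zup : ‖2 - z‖ ≤ 4 := by
    have h := norm_sub_le 2 z
    rw [Complex.norm_two] at h
    clear * - h hzup
    linarith
  -- ## the modulus equation
  have hzw : z ^ w = 2 - z := by linear_combination hz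
  clear hz
  have habspow : (‖z‖) ^ w = ‖2 - z‖ := by
    rw [← norm_pow, hzw]
  obtain ⟨L, hLdef⟩ : ∃ L : ℝ, L = Real.log (‖2 - z‖) := ⟨_, rfl⟩
  have hlogz : (w:ℝ) * Real.log (‖z‖) = L := by
    rw [hLdef, ← habspow, Real.log_pow]
  have hlogz2 : Real.log (‖z‖) = L * q := by
    rw [hqdef, mul_one_div, eq_div_iff hwne, mul_comm]
    exact hlogz
  have hzexp : ‖z‖ = Real.exp (L * q) := by
    rw [← hlogz2, Real.exp_log (by linarith : (0:ℝ) < ‖z‖)]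
  have hexpL : Real.exp L = ‖2 - z‖ := by
    rw [hLdef]; exact Real.exp_log (by linarith)
  -- ## the quotient v = z / ζ and its logarithm
  obtain ⟨v, hvdef⟩ : ∃ v : ℂ, v = z / ζ := ⟨_, rfl⟩
  have hvabs : ‖v‖ = ‖z‖ := by
    rw [hvdef, norm_div, hζabs, div_one]
  have hv1abs : ‖v - 1‖ = ‖z - ζ‖ := by
    rw [show v - 1 = (z - ζ)/ζ by rw [hvdef]; field_simp, norm_div, hζabs, div_one]
  have hvne : v ≠ 0 := by
    intro h
    rw [h, norm_zero] at hvabs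
    linarith
  have hzv : z - ζ = ζ * (v - 1) := by
    rw [hvdef]; field_simp
  have hvw : v ^ w = 2 - z := by
    rw [hvdef, div_pow, hζw, div_one, hzw]
  have hexpw : (2:ℂ) - z = Complex.exp ((w:ℂ) * Complex.log v) := by
    rw [Complex.exp_nat_mul, Complex.exp_log hvne]
    exact hvw.symm
  have hwlogre : ((w:ℂ) * Complex.log v).re = L := by
    have h1 : ((w:ℂ) * Complex.log v).re = (w:ℝ) * Real.log (‖v‖) := by
      simp [Complex.mul_re, Complex.log_re]
    rw [h1, hvabs]
    exact hlogz
  have hwlogim : ((w:ℂ) * Complex.log v).im = (w:ℝ) * v.arg := by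
    simp [Complex.mul_im, Complex.log_im]
  have him : -z.im = ‖2 - z‖ * Real.sin ((w:ℝ) * v.arg) := by
    have h1 : ((2:ℂ) - z).im = Real.exp ((w:ℂ) * Complex.log v).re
        * Real.sin (((w:ℂ) * Complex.log v).im) := by
      rw [hexpw, Complex.exp_im]
    rw [hwlogre, hwlogim, hexpL] at h1
    simpa using h1
  have hvre_eq : v.re = Real.exp (L * q) * Real.cos v.arg := by
    conv_lhs => rw [← Complex.exp_log hvne]
    rw [Complex.exp_re, Complex.log_re, Complex.log_im, hvabs, hlogz2]
  clear hzw habspow hvw hζw hexpw hwlogre hwlogim hvdef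
  -- ## small powers of θ
  have hθ2 : θ^2 ≤ θ/100 := by clear * - hθpos hθ100; nlinarith
  have hθ4a : θ^4 ≤ θ^2/10000 := by
    have h : θ^2 ≤ 1/10000 := by clear * - hθpos hθ100; nlinarith
    clear * - h hθpos
    nlinarith [sq_nonneg θ, mul_le_mul_of_nonneg_left h (sq_nonneg θ)]
  -- ## the root-of-unity side
  obtain ⟨M, hMdef⟩ : ∃ M : ℝ, M = ‖2 - ζ‖ := ⟨_, rfl⟩
  have hMnn : (0:ℝ) ≤ M := by rw [hMdef]; positivity
  have hM2 : M ^ 2 = 5 - 4 * Real.cos θ := by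
    rw [hMdef, Complex.sq_norm, Complex.normSq_apply, Complex.sub_re, Complex.sub_im,
      hζre, hζim]
    simp only [Complex.re_ofNat, Complex.im_ofNat]
    linear_combination Real.sin_sq_add_cos_sq θ
  have hMlo : 1 ≤ M := by
    clear * - hM2 hMnn
    nlinarith [Real.cos_le_one θ]
  have hMup : M ≤ 3 := by
    clear * - hM2 hMnn
    nlinarith [Real.neg_one_le_cos θ]
  obtain ⟨P, hPdef⟩ : ∃ P : ℝ, P = Real.log M := ⟨_, rfl⟩
  have hlogM2 : Real.log (M ^ 2) = 2 * P := by
    rw [Real.log_pow, hPdef]; push_cast; ring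
  have hθ1 : θ ≤ 1 := by linarith
  have hyup : M ^ 2 ≤ 1 + 2 * θ^2 := by
    rw [hM2]
    clear * - hθpos hθ100
    nlinarith [one_sub_cos_le_sq θ]
  have hylo : 1 + 2 * θ^2 - θ^4 ≤ M ^ 2 := by
    rw [hM2]
    have h := one_sub_cos_ge_sq hθpos hθ1
    clear * - h hθpos
    nlinarith [pow_nonneg hθpos.le 4]
  have hM2pos : (0:ℝ) < M^2 := by clear * - hMlo hMnn; nlinarith
  have hP : |P - θ^2| ≤ 3 * θ^4 := by
    have hup : Real.log (M^2) ≤ 2*θ^2 := by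
      refine le_trans (Real.log_le_sub_one_of_pos hM2pos) ?_
      clear * - hyup
      linarith
    have hlo : 2*θ^2 - 5*θ^4 ≤ Real.log (M^2) := by
      have h1 : Real.log ((M^2)⁻¹) ≤ (M^2)⁻¹ - 1 :=
        Real.log_le_sub_one_of_pos (by positivity)
      rw [Real.log_inv] at h1
      have key : (M^2)⁻¹ ≤ 1 - 2*θ^2 + 5*θ^4 := by
        have hfac : (0:ℝ) ≤ 1 - 2*θ^2 + 5*θ^4 := by
          clear * - hθpos hθ100
          nlinarith [sq_nonneg θ, sq_nonneg (θ^2)]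
        have h2 : 1 ≤ (1 - 2*θ^2 + 5*θ^4) * M^2 := by
          have hprod := mul_le_mul_of_nonneg_left hylo hfac
          have h6 : (0:ℝ) ≤ 12 - 5*θ^2 := by clear * - hθpos hθ100; nlinarith
          have h7 := mul_nonneg (pow_nonneg hθpos.le 6) h6
          clear * - hprod h7
          nlinarith
        have h3 := mul_le_mul_of_nonneg_right h2 (inv_nonneg.mpr hM2pos.le)
        rwa [one_mul, mul_assoc, mul_inv_cancel₀ (ne_of_gt hM2pos), mul_one] at h3
      clear * - h1 key
      linarith
    rw [hlogM2] at hup hlo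
    rw [abs_le]
    clear * - hup hlo hθpos
    constructor <;> nlinarith [pow_nonneg hθpos.le 4]
  have habsdiff : |‖2 - z‖ - M| ≤ ‖z - ζ‖ := by
    have h := abs_norm_sub_norm_le (2 - z) (2 - ζ)
    rw [show ((2:ℂ) - z) - (2 - ζ) = -(z - ζ) by ring, norm_neg, ← hMdef] at h
    exact h
  have hLPgen : |L - P| ≤ ‖z - ζ‖ * (100/99) := by
    have h := log_sub_le_aux (by norm_num : (0:ℝ) < 99/100) h2zlo
      (le_trans (by norm_num) hMlo)
    rw [← hLdef, ← hPdef] at h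
    refine le_trans h ?_
    rw [div_le_iff₀ (by norm_num : (0:ℝ) < 99/100)]
    have := habsdiff
    clear * - this
    nlinarith [abs_nonneg (‖2 - z‖ - M)]
  have hLP1 : |L - P| ≤ θ/500 := by
    refine le_trans hLPgen ?_
    clear * - hεθ hθpos
    nlinarith
  have hL1 : |L| ≤ θ := by
    have h1 := abs_le.mp hLP1
    have h2 := abs_le.mp hP
    rw [abs_le]
    clear * - h1 h2 hθ2 hθ4a hθpos
    constructor <;> nlinarith
  -- ## bounding the argument of v
  have hvim : |v.im| ≤ ‖z - ζ‖ := by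
    calc |v.im| = |(v - 1).im| := by simp
    _ ≤ ‖v - 1‖ := Complex.abs_im_le_norm _
    _ = ‖z - ζ‖ := hv1abs
  have hvrepos : 0 < v.re := by
    have h1 : |(v - 1).re| ≤ ‖v - 1‖ := Complex.abs_re_le_norm _
    rw [hv1abs] at h1
    have h2 := abs_le.mp h1
    have h3 : v.re = 1 + (v - 1).re := by simp
    rw [h3]
    clear * - h2 hεsmall
    linarith
  have hargv : |v.arg| < π/2 := Complex.abs_arg_lt_pi_div_two_iff.mpr (Or.inl hvrepos)
  have harg1 : |v.arg| ≤ 2 * ‖z - ζ‖ := by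
    have h2 := abs_le_sin_bound hargv.le
    rw [Complex.sin_arg, abs_div, _root_.abs_of_nonneg (norm_nonneg v), hvabs] at h2
    have h3 : |v.im| / ‖z‖ ≤ |v.im| * (100/99) := by
      rw [div_le_iff₀ (by linarith : (0:ℝ) < ‖z‖)]
      clear * - hzlo
      nlinarith [abs_nonneg v.im]
    have h4 := mul_le_mul_of_nonneg_left h3 (by positivity : (0:ℝ) ≤ π/2)
    have h5 := mul_le_mul_of_nonneg_right hπ315.le (abs_nonneg v.im)
    clear * - h2 h4 h5 hvim
    nlinarith [abs_nonneg v.im]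
  have htsmall : |(w:ℝ) * v.arg| ≤ 1/50 := by
    rw [abs_mul, _root_.abs_of_nonneg (Nat.cast_nonneg w : (0:ℝ) ≤ w)]
    have h1 : |v.arg| ≤ 2 * ((1/100)*q) := le_trans harg1 (by clear * - hεw; linarith)
    calc (w:ℝ) * |v.arg| ≤ (w:ℝ) * (2 * ((1/100)*q)) :=
          mul_le_mul_of_nonneg_left h1 hwpos.le
    _ = (1/50) * (q * (w:ℝ)) := by ring
    _ = 1/50 := by rw [hqw, mul_one]
  have hsinθ : |Real.sin θ| ≤ θ := by
    rw [_root_.abs_of_nonneg (Real.sin_nonneg_of_nonneg_of_le_pi hθpos.le (by linarith))]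
    exact Real.sin_le hθpos.le
  have hzim : |z.im| ≤ θ + θ/600 := by
    have h2 : z.im = ζ.im + (z - ζ).im := by simp
    have h3 : |(z - ζ).im| ≤ ‖z - ζ‖ := Complex.abs_im_le_norm _
    calc |z.im| = |ζ.im + (z - ζ).im| := by rw [← h2]
    _ ≤ |ζ.im| + |(z - ζ).im| := abs_add_le _ _
    _ ≤ θ + θ/600 := by rw [hζim]; clear * - h3 hεθ hsinθ; linarith
  have hsinw : |Real.sin ((w:ℝ) * v.arg)| ≤ (51/50) * θ := by
    have h1 : |z.im| = ‖2 - z‖ * |Real.sin ((w:ℝ) * v.arg)| := by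
      rw [← abs_neg z.im, him, abs_mul,
        _root_.abs_of_nonneg (norm_nonneg (2 - z))]
    have h6 := mul_nonneg (by linarith : (0:ℝ) ≤ ‖2 - z‖ - 99/100)
        (abs_nonneg (Real.sin ((w:ℝ) * v.arg)))
    clear * - h1 h6 hzim h2zlo hθpos
    nlinarith [abs_nonneg (Real.sin ((w:ℝ) * v.arg))]
  have ht2θ : |(w:ℝ) * v.arg| ≤ 2 * θ := by
    have h := abs_le_sin_bound (le_trans htsmall (by clear * - hπ3; nlinarith : (1:ℝ)/50 ≤ π/2))
    have h7 := mul_le_mul_of_nonneg_left hsinw (by positivity : (0:ℝ) ≤ π/2)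
    clear * - h h7 hπ315 hθpos
    nlinarith [abs_nonneg (Real.sin ((w:ℝ) * v.arg))]
  have harg2 : |v.arg| ≤ 2*θ*q := by
    rw [abs_mul, _root_.abs_of_nonneg (Nat.cast_nonneg w : (0:ℝ) ≤ w)] at ht2θ
    have h1 : |v.arg| = ((w:ℝ) * |v.arg|) * q := by
      rw [mul_comm ((w:ℝ)) (|v.arg|), mul_assoc, mul_comm ((w:ℝ)) q, hqw, mul_one]
    rw [h1]
    have := mul_le_mul_of_nonneg_right ht2θ hqpos.le
    clear * - this
    nlinarith
  have hlogv : ‖Complex.log v‖ ≤ 3*θ*q := by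
    have h1 := Complex.norm_le_abs_re_add_abs_im (Complex.log v)
    rw [Complex.log_re, Complex.log_im, hvabs, hlogz2, abs_mul,
      _root_.abs_of_nonneg hqpos.le] at h1
    have h3 : |L| * q ≤ θ * q := mul_le_mul_of_nonneg_right hL1 hqpos.le
    clear * - h1 h3 harg2
    calc ‖Complex.log v‖ ≤ |L| * q + |v.arg| := h1
    _ ≤ θ*q + 2*θ*q := by linarith
    _ = 3*θ*q := by ring
  have hεnew : ‖z - ζ‖ ≤ 6*θ*q := by
    rw [← hv1abs]
    have h1 : v - 1 = Complex.exp (Complex.log v) - 1 := by rw [Complex.exp_log hvne]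
    have h2 : ‖Complex.log v‖ ≤ 1 := by
      refine le_trans hlogv ?_
      have h4 : 3*θ*q ≤ 3*(1/100)*(1/1000) := by
        clear * - hθpos hθ100 hqpos hq1000
        nlinarith
      clear * - h4
      linarith
    rw [h1]
    calc ‖Complex.exp (Complex.log v) - 1‖
        ≤ 2 * ‖Complex.log v‖ := Complex.norm_exp_sub_one_le h2
    _ ≤ 2 * (3*θ*q) := by clear * - hlogv; linarith
    _ = 6*θ*q := by ring
  -- ## second pass bounds
  have hLP2 : |L - P| ≤ 7*θ*q := by
    refine le_trans hLPgen ?_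
    have h0 : (0:ℝ) ≤ θ*q := by positivity
    clear * - h0 hεnew
    nlinarith
  have hθqsmall : θ*q ≤ θ*(θ/6) := by
    have := mul_le_mul_of_nonneg_left hqθ hθpos.le
    linarith
  have hL2 : |L| ≤ 3*θ^2 := by
    have h1 := abs_le.mp hLP2
    have h2 := abs_le.mp hP
    rw [abs_le]
    clear * - h1 h2 hθqsmall hθ4a hθpos
    constructor <;> nlinarith [sq_nonneg θ]
  have hexpLw1 : |L * q| ≤ 1 := by
    rw [abs_mul, _root_.abs_of_nonneg hqpos.le]
    have h1 : |L| * q ≤ θ * (1/1000) := by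
      have := mul_le_mul hL1 hq1000 hqpos.le hθpos.le
      linarith
    clear * - h1 hθ100 hθpos
    nlinarith
  have hvre1 : |v.re - 1| ≤ 7*θ^2*q := by
    rw [hvre_eq]
    have he1 : |Real.exp (L*q) - 1| ≤ 2*(|L| *q) := by
      have h := Real.abs_exp_sub_one_le hexpLw1
      rwa [abs_mul, _root_.abs_of_nonneg hqpos.le] at h
    have hLq : |L| * q ≤ θ * (1/1000) := by
      have := mul_le_mul hL1 hq1000 hqpos.le hθpos.le
      linarith
    have he2 : Real.exp (L*q) ≤ 2 := by
      have h1 := abs_le.mp he1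
      clear * - h1 hLq hθ100 hθpos
      nlinarith
    have he2' : (0:ℝ) < Real.exp (L*q) := Real.exp_pos _
    have hcos1 : 1 - Real.cos v.arg ≤ (2*θ*q)^2/2 := by
      have h := one_sub_cos_le_sq v.arg
      have h2 : v.arg^2 ≤ (2*θ*q)^2 := by
        rw [← _root_.sq_abs v.arg]
        exact pow_le_pow_left₀ (abs_nonneg _) harg2 2
      clear * - h h2
      linarith
    have hcosle : Real.cos v.arg ≤ 1 := Real.cos_le_one _
    have hid : Real.exp (L*q) * Real.cos v.arg - 1
        = (Real.exp (L*q) - 1) - Real.exp (L*q) * (1 - Real.cos v.arg) := by ring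
    rw [hid]
    have htri : |(Real.exp (L*q) - 1) - Real.exp (L*q) * (1 - Real.cos v.arg)|
        ≤ |Real.exp (L*q) - 1| + Real.exp (L*q) * (1 - Real.cos v.arg) := by
      have h := abs_add_le (Real.exp (L*q) - 1)
        (-(Real.exp (L*q) * (1 - Real.cos v.arg)))
      rw [abs_neg, _root_.abs_of_nonneg
        (mul_nonneg he2'.le (by linarith : (0:ℝ) ≤ 1 - Real.cos v.arg))] at h
      calc |(Real.exp (L*q) - 1) - Real.exp (L*q) * (1 - Real.cos v.arg)|
          = |(Real.exp (L*q) - 1) + -(Real.exp (L*q) * (1 - Real.cos v.arg))| := by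
            ring_nf
      _ ≤ _ := h
    have hmul : Real.exp (L*q) * (1 - Real.cos v.arg) ≤ 4*θ^2*q^2 := by
      have hc0 : (0:ℝ) ≤ 1 - Real.cos v.arg := by linarith
      clear * - hcos1 he2 he2' hc0
      nlinarith
    have hl2q : |L| *q ≤ 3*θ^2*q := by
      have := mul_le_mul_of_nonneg_right hL2 hqpos.le
      linarith
    have hq2 : θ^2*q^2 ≤ θ^2*q*(1/1000) := by
      have h0 : (0:ℝ) ≤ θ^2*q := by positivity
      have := mul_le_mul_of_nonneg_left hq1000 h0
      clear * - this
      nlinarith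
    clear * - he1 htri hmul hl2q hq2
    nlinarith
  have hvim' : |v.im| ≤ 6*θ*q := le_trans hvim hεnew
  have hzζre : |(z - ζ).re| ≤ 20*θ^2*q := by
    rw [hzv]
    have h1 : (ζ * (v - 1)).re = Real.cos θ * (v.re - 1) - Real.sin θ * v.im := by
      rw [Complex.mul_re, hζre, hζim]
      simp [Complex.sub_re, Complex.sub_im]
    rw [h1]
    have htri : |Real.cos θ * (v.re - 1) - Real.sin θ * v.im|
        ≤ |Real.cos θ| * |v.re - 1| + |Real.sin θ| * |v.im| := by
      have h := abs_add_le (Real.cos θ * (v.re - 1)) (-(Real.sin θ * v.im))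
      rw [abs_neg, abs_mul, abs_mul] at h
      calc |Real.cos θ * (v.re - 1) - Real.sin θ * v.im|
          = |Real.cos θ * (v.re - 1) + -(Real.sin θ * v.im)| := by ring_nf
      _ ≤ _ := h
    have hcθ : |Real.cos θ| ≤ 1 := Real.abs_cos_le_one θ
    have hterm1 : |Real.cos θ| * |v.re - 1| ≤ 7*θ^2*q := by
      calc |Real.cos θ| * |v.re - 1| ≤ 1 * (7*θ^2*q) :=
            mul_le_mul hcθ hvre1 (abs_nonneg _) (by norm_num)
      _ = 7*θ^2*q := by ring
    have hterm2 : |Real.sin θ| * |v.im| ≤ θ * (6*θ*q) :=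
      mul_le_mul hsinθ hvim' (abs_nonneg _) hθpos.le
    have h0 : (0:ℝ) ≤ θ^2*q := by positivity
    clear * - htri hterm1 hterm2 h0
    nlinarith
  -- ## comparing |2-z|² with M²
  have hzζim : |(z - ζ).im| ≤ 6*θ*q := le_trans (Complex.abs_im_le_norm _) hεnew
  have h2ζre : |((2:ℂ) - ζ).re| ≤ 3 := by
    rw [Complex.sub_re, hζre, Complex.re_ofNat]
    have h1 := Real.cos_le_one θ
    have h2 := Real.neg_one_le_cos θ
    rw [abs_le]
    constructor <;> [linarith; linarith]
  have h2ζim : |((2:ℂ) - ζ).im| ≤ θ := by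
    rw [Complex.sub_im, hζim, Complex.im_ofNat]
    rw [show (0:ℝ) - Real.sin θ = -(Real.sin θ) by ring, abs_neg]
    exact hsinθ
  have hkey : |‖(2:ℂ) - z‖^2 - M^2| ≤ 150*θ^2*q := by
    have hns := Complex.normSq_sub (2 - ζ) (z - ζ)
    have h1 : ‖(2:ℂ) - z‖^2
        = M^2 + ‖z - ζ‖^2
          - 2*(((2:ℂ) - ζ) * (starRingEnd ℂ) (z - ζ)).re := by
      rw [show (2:ℂ) - z = (2 - ζ) - (z - ζ) by ring, Complex.sq_norm, hns, hMdef,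
        Complex.sq_norm, Complex.sq_norm]
    have h2 : (((2:ℂ) - ζ) * (starRingEnd ℂ) (z - ζ)).re
        = ((2:ℂ) - ζ).re * (z - ζ).re + ((2:ℂ) - ζ).im * (z - ζ).im := by
      rw [Complex.mul_re, Complex.conj_re, Complex.conj_im]
      ring
    have hb1 : |((2:ℂ) - ζ).re * (z - ζ).re| ≤ 3 * (20*θ^2*q) := by
      rw [abs_mul]
      exact mul_le_mul h2ζre hzζre (abs_nonneg _) (by norm_num)
    have hb2 : |((2:ℂ) - ζ).im * (z - ζ).im| ≤ θ * (6*θ*q) := by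
      rw [abs_mul]
      exact mul_le_mul h2ζim hzζim (abs_nonneg _) hθpos.le
    have hb3 : ‖z - ζ‖^2 ≤ (6*θ*q)^2 :=
      pow_le_pow_left₀ (norm_nonneg _) hεnew 2
    have htri := abs_add_le (((2:ℂ) - ζ).re * (z - ζ).re) (((2:ℂ) - ζ).im * (z - ζ).im)
    have habs2 := abs_le.mp (le_trans htri (by clear * - hb1 hb2; linarith :
      |((2:ℂ) - ζ).re * (z - ζ).re| + |((2:ℂ) - ζ).im * (z - ζ).im|
        ≤ 3 * (20*θ^2*q) + θ * (6*θ*q)))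
    rw [← h2] at habs2
    have hq2 : θ^2*q^2 ≤ θ^2*q*(1/1000) := by
      have h0 : (0:ℝ) ≤ θ^2*q := by positivity
      have := mul_le_mul_of_nonneg_left hq1000 h0
      clear * - this
      nlinarith
    have h0 : (0:ℝ) ≤ θ^2*q := by positivity
    have hnn := norm_nonneg (z - ζ)
    rw [abs_le]
    constructor
    · clear * - h1 hb3 habs2 hq2 h0 hnn
      nlinarith [sq_nonneg (‖z - ζ‖)]
    · clear * - h1 hb3 habs2 hq2 h0 hnn
      nlinarith [sq_nonneg (‖z - ζ‖)]
  -- ## the refined bound on L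
  have hLP3 : |L - P| ≤ 90*θ^2*q := by
    have hlogL2 : Real.log (‖(2:ℂ) - z‖^2) = 2*L := by
      rw [Real.log_pow, hLdef]; push_cast; ring
    have ha : (49:ℝ)/50 ≤ ‖(2:ℂ) - z‖^2 := by
      clear * - h2zlo
      nlinarith
    have hb : (49:ℝ)/50 ≤ M^2 := by
      clear * - hMlo hMnn
      nlinarith
    have h := log_sub_le_aux (by norm_num : (0:ℝ) < 49/50) ha hb
    rw [hlogL2, hlogM2] at h
    have h0 : (0:ℝ) ≤ θ^2*q := by positivity
    have h5 : |‖(2:ℂ) - z‖^2 - M^2| / ((49:ℝ)/50)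
        ≤ (150*θ^2*q) * (50/49) := by
      rw [div_le_iff₀ (by norm_num : (0:ℝ) < 49/50)]
      have := hkey
      clear * - this
      nlinarith [abs_nonneg (‖(2:ℂ) - z‖^2 - M^2)]
    have h6 := abs_le.mp (le_trans h h5)
    rw [abs_le]
    clear * - h6 h0
    constructor <;> nlinarith
  have hLfin : |L - θ^2| ≤ 3*θ^4 + 90*θ^2*q := by
    have h1 := abs_le.mp hLP3
    have h2 := abs_le.mp hP
    rw [abs_le]
    clear * - h1 h2
    constructor <;> linarith
  -- ## conclusion
  have hgoal1 : 4*π^2*(k:ℝ)^2/(w:ℝ)^3 = θ^2*q := by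
    rw [hθq, hqdef]
    field_simp
    ring
  have hgoal2 : (50000:ℝ)*(k:ℝ)^3/(w:ℝ)^4 = 50000*((k:ℝ)^3*q^4) := by
    rw [hqdef]
    field_simp
  constructor
  · rw [hzexp, hgoal1, hgoal2]
    have e1 : |Real.exp (L*q) - 1 - L*q| ≤ (L*q)^2 :=
      Real.abs_exp_sub_one_sub_id_le hexpLw1
    have e2 : (L*q)^2 ≤ 9*θ^4*q^2 := by
      have hL2' : L^2 ≤ 9*θ^4 := by
        have h := abs_le.mp hL2
        clear * - h
        nlinarith
      have := mul_le_mul_of_nonneg_right hL2' (sq_nonneg q)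
      clear * - this
      nlinarith
    have e3 : |L*q - θ^2*q| ≤ (3*θ^4 + 90*θ^2*q)*q := by
      rw [show L*q - θ^2*q = (L - θ^2)*q by ring, abs_mul,
        _root_.abs_of_nonneg hqpos.le]
      exact mul_le_mul_of_nonneg_right hLfin hqpos.le
    have e4 : |Real.exp (L*q) - (1 + θ^2*q)|
        ≤ (L*q)^2 + |L*q - θ^2*q| := by
      have h := abs_add_le (Real.exp (L*q) - 1 - L*q) (L*q - θ^2*q)
      calc |Real.exp (L*q) - (1 + θ^2*q)|
          = |(Real.exp (L*q) - 1 - L*q) + (L*q - θ^2*q)| := by ring_nf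
      _ ≤ |Real.exp (L*q) - 1 - L*q| + |L*q - θ^2*q| := h
      _ ≤ (L*q)^2 + |L*q - θ^2*q| := by clear * - e1; linarith
    -- monomial conversion
    have hπ2 : π^2 ≤ 10 := by
      clear * - hπ315 hπpos
      nlinarith [mul_nonneg (by linarith : (0:ℝ) ≤ 3.15 - π)
        (by linarith : (0:ℝ) ≤ 3.15 + π)]
    have hπ2' : π^2 ≤ 9.93 := by
      clear * - hπ315 hπpos
      nlinarith [mul_nonneg (by linarith : (0:ℝ) ≤ 3.15 - π)
        (by linarith : (0:ℝ) ≤ 3.15 + π)]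
    have hπ4 : π^4 ≤ 99 := by
      clear * - hπ2' hπpos
      nlinarith [mul_nonneg (by nlinarith [sq_nonneg π] : (0:ℝ) ≤ 9.93 - π^2)
        (by positivity : (0:ℝ) ≤ 9.93 + π^2)]
    have hknn : (0:ℝ) ≤ (k:ℝ) := by positivity
    have hθ4q : θ^4 = 16*π^4*(k:ℝ)^4*q^4 := by rw [hθq]; ring
    have hθ2q : θ^2 = 4*π^2*(k:ℝ)^2*q^2 := by rw [hθq]; ring
    have hk4q : (k:ℝ)^4*q^5 ≤ (k:ℝ)^3*q^4 := by
      have h0 : (0:ℝ) ≤ (k:ℝ)^3*q^4 := by positivity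
      have := mul_le_mul_of_nonneg_left hkq h0
      clear * - this
      nlinarith
    have hk23 : (k:ℝ)^2*q^4 ≤ (k:ℝ)^3*q^4 := by
      have h0 : (0:ℝ) ≤ (k:ℝ)^2*q^4 := by positivity
      have := mul_le_mul_of_nonneg_left hk1R h0
      clear * - this
      nlinarith
    have s1 : θ^4*q^2 ≤ θ^4*q := by
      have h0 : (0:ℝ) ≤ θ^4*q := by positivity
      have := mul_le_mul_of_nonneg_left hq1000 h0
      clear * - this h0
      nlinarith
    have s2 : θ^4*q ≤ 1584*((k:ℝ)^4*q^5) := by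
      rw [hθ4q]
      have h0 : (0:ℝ) ≤ (k:ℝ)^4*q^5 := by positivity
      have := mul_le_mul_of_nonneg_right hπ4 h0
      clear * - this
      nlinarith
    have s3 : θ^2*q^2 ≤ 40*((k:ℝ)^2*q^4) := by
      rw [hθ2q]
      have h0 : (0:ℝ) ≤ (k:ℝ)^2*q^4 := by positivity
      have := mul_le_mul_of_nonneg_right hπ2 h0
      clear * - this
      nlinarith
    have etot : (L*q)^2 + |L*q - θ^2*q| ≤ 50000*((k:ℝ)^3*q^4) := by
      have e3' : |L*q - θ^2*q| ≤ 3*(θ^4*q) + 90*(θ^2*q^2) := by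
        refine le_trans e3 (le_of_eq ?_)
        ring
      clear * - e2 e3' s1 s2 s3 hk4q hk23
      nlinarith
    exact le_trans e4 etot
  · have hLpos : 0 < L := by
      have h1 := abs_le.mp hLfin
      have h2 : 90*θ^2*q ≤ 90*θ^2*(1/1000) := by
        have h0 : (0:ℝ) ≤ 90*θ^2 := by positivity
        have := mul_le_mul_of_nonneg_left hq1000 h0
        clear * - this
        nlinarith
      clear * - h1 h2 hθ4a hθpos
      nlinarith [sq_nonneg θ]
    rw [hzexp]
    have h := Real.exp_lt_exp.mpr (show (0:ℝ) < L*q by positivity)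
    simpa using h
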